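/- For n ≥ 1, at every point (x,t) where L_n(x,t) ≠ 0, the function u_n(x,t) = (∂_x L_n(x,t))/L_n(x,t) satisfies ∂u_n/∂t = x ∂²u_n/∂x² + 2 ∂u_n/∂x + u_n² + 2 x u_n ∂u_n/∂x. -/

import Mathlib

noncomputable def L (n : ℕ) (x t : ℝ) : ℝ :=
  (n.factorial : ℝ) * ∑ r ∈ Finset.range (n + 1),
    t ^ (n - r) * x ^ r / (((n - r).factorial : ℝ) * ((r.factorial : ℝ)) ^ 2)

noncomputable def u (n : ℕ) (x t : ℝ) : ℝ := deriv (fun s => L n s t) x / L n x t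

/-- ∂L/∂x -/
noncomputable def L₁ (n : ℕ) (x t : ℝ) : ℝ :=
  (n.factorial : ℝ) * ∑ r ∈ Finset.range (n + 1),
    t ^ (n - r) * ((r : ℝ) * x ^ (r - 1)) / (((n - r).factorial : ℝ) * ((r.factorial : ℝ)) ^ 2)

/-- ∂²L/∂x² -/
noncomputable def L₂ (n : ℕ) (x t : ℝ) : ℝ :=
  (n.factorial : ℝ) * ∑ r ∈ Finset.range (n + 1),
    t ^ (n - r) * ((r : ℝ) * (((r - 1 : ℕ) : ℝ) * x ^ (r - 1 - 1))) /
      (((n - r).factorial : ℝ) * ((r.factorial : ℝ)) ^ 2)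

/-- ∂³L/∂x³ -/
noncomputable def L₃ (n : ℕ) (x t : ℝ) : ℝ :=
  (n.factorial : ℝ) * ∑ r ∈ Finset.range (n + 1),
    t ^ (n - r) * ((r : ℝ) * (((r - 1 : ℕ) : ℝ) * (((r - 1 - 1 : ℕ) : ℝ) * x ^ (r - 1 - 1 - 1)))) /
      (((n - r).factorial : ℝ) * ((r.factorial : ℝ)) ^ 2)

/-- ∂L/∂t -/
noncomputable def T (n : ℕ) (x t : ℝ) : ℝ :=
  (n.factorial : ℝ) * ∑ r ∈ Finset.range (n + 1),
    (((n - r : ℕ) : ℝ) * t ^ (n - r - 1)) * x ^ r /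
      (((n - r).factorial : ℝ) * ((r.factorial : ℝ)) ^ 2)

/-- ∂²L/∂x∂t -/
noncomputable def M (n : ℕ) (x t : ℝ) : ℝ :=
  (n.factorial : ℝ) * ∑ r ∈ Finset.range (n + 1),
    (((n - r : ℕ) : ℝ) * t ^ (n - r - 1)) * ((r : ℝ) * x ^ (r - 1)) /
      (((n - r).factorial : ℝ) * ((r.factorial : ℝ)) ^ 2)

lemma hL₁ (n : ℕ) (x t : ℝ) : HasDerivAt (fun s => L n s t) (L₁ n x t) x := by
  unfold L L₁
  exact HasDerivAt.const_mul _ (HasDerivAt.fun_sum fun r _ =>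
    ((hasDerivAt_pow r x).const_mul (t ^ (n - r))).div_const _)

lemma hL₂ (n : ℕ) (x t : ℝ) : HasDerivAt (fun s => L₁ n s t) (L₂ n x t) x := by
  unfold L₁ L₂
  exact HasDerivAt.const_mul _ (HasDerivAt.fun_sum fun r _ =>
    (((hasDerivAt_pow (r - 1) x).const_mul (r : ℝ)).const_mul (t ^ (n - r))).div_const _)

lemma hL₃ (n : ℕ) (x t : ℝ) : HasDerivAt (fun s => L₂ n s t) (L₃ n x t) x := by
  unfold L₂ L₃
  exact HasDerivAt.const_mul _ (HasDerivAt.fun_sum fun r _ =>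
    ((((hasDerivAt_pow (r - 1 - 1) x).const_mul ((r - 1 : ℕ) : ℝ)).const_mul
      (r : ℝ)).const_mul (t ^ (n - r))).div_const _)

lemma hT (n : ℕ) (x t : ℝ) : HasDerivAt (fun s => L n x s) (T n x t) t := by
  unfold L T
  exact HasDerivAt.const_mul _ (HasDerivAt.fun_sum fun r _ =>
    ((hasDerivAt_pow (n - r) t).mul_const (x ^ r)).div_const _)

lemma hM (n : ℕ) (x t : ℝ) : HasDerivAt (fun s => L₁ n x s) (M n x t) t := by
  unfold L₁ M
  exact HasDerivAt.const_mul _ (HasDerivAt.fun_sum fun r _ =>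
    ((hasDerivAt_pow (n - r) t).mul_const ((r : ℝ) * x ^ (r - 1))).div_const _)

lemma hTx (n : ℕ) (x t : ℝ) : HasDerivAt (fun s => T n s t) (M n x t) x := by
  unfold T M
  exact HasDerivAt.const_mul _ (HasDerivAt.fun_sum fun r _ =>
    ((hasDerivAt_pow r x).const_mul (((n - r : ℕ) : ℝ) * t ^ (n - r - 1))).div_const _)

/-- The heat-type equation L_t = L_x + x L_xx. -/
lemma heatEq (n : ℕ) (x t : ℝ) : T n x t = L₁ n x t + x * L₂ n x t := by
  unfold T L₁ L₂
  rw [Finset.mul_sum, Finset.mul_sum, Finset.mul_sum, Finset.mul_sum, ← Finset.sum_add_distrib]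
  rw [Finset.sum_range_succ, Finset.sum_range_succ']
  simp only [Nat.sub_self, Nat.cast_zero, zero_mul, mul_zero, zero_div, add_zero]
  refine Finset.sum_congr rfl fun r hr => ?_
  have hrn : r < n := Finset.mem_range.mp hr
  obtain ⟨k, hk⟩ : ∃ k, n - r = k + 1 := ⟨n - r - 1, by omega⟩
  have hk' : n - (r + 1) = k := by omega
  rw [hk, hk']
  simp only [Nat.add_sub_cancel, Nat.factorial_succ]
  rcases r with _ | m
  · push_cast
    field_simp
    ring
  · rw [show m + 1 - 1 = m from rfl,
      show x ^ (m + 1) = x * x ^ m from (pow_succ' x m)]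
    push_cast
    have hkf : ((k).factorial : ℝ) ≠ 0 := Nat.cast_ne_zero.mpr (Nat.factorial_ne_zero _)
    have hmf : ((m + 1).factorial : ℝ) ≠ 0 := Nat.cast_ne_zero.mpr (Nat.factorial_ne_zero _)
    have hk1 : ((k : ℝ) + 1) ≠ 0 := by positivity
    have hm2 : ((m : ℝ) + 1 + 1) ≠ 0 := by positivity
    field_simp
    ring

/-- mixed partial identity: M = 2 L₂ + x L₃ -/
lemma mixedEq (n : ℕ) (x t : ℝ) : M n x t = 2 * L₂ n x t + x * L₃ n x t := by
  have h1 : HasDerivAt (fun s => T n s t) (M n x t) x := hTx n x t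
  have h2 : HasDerivAt (fun s => T n s t)
      (L₂ n x t + ((1 : ℝ) * L₂ n x t + x * L₃ n x t)) x := by
    have : (fun s => T n s t) = fun s => L₁ n s t + s * L₂ n s t := by
      funext s; exact heatEq n s t
    rw [this]
    exact (hL₂ n x t).add ((hasDerivAt_id x).mul (hL₃ n x t))
  have := h1.unique h2
  rw [this]; ring

theorem laguerre_ratio_solves_nonlinear (n : ℕ) (hn : 1 ≤ n) (x t : ℝ)
    (h : L n x t ≠ 0) :
    deriv (fun s => u n x s) t =
      x * deriv (deriv (fun s => u n s t)) x + 2 * deriv (fun s => u n s t) x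
        + (u n x t) ^ 2 + 2 * x * u n x t * deriv (fun s => u n s t) x := by
  have e1 : (fun s => u n s t) = fun s => L₁ n s t / L n s t := by
    funext s; unfold u; rw [(hL₁ n s t).deriv]
  have e2 : (fun s => u n x s) = fun s => L₁ n x s / L n x s := by
    funext s; unfold u; rw [(hL₁ n x s).deriv]
  have eu : u n x t = L₁ n x t / L n x t := congrFun e1 x
  -- the open set where L ≠ 0
  have hdiff : Differentiable ℝ (fun s => L n s t) := fun y => (hL₁ n y t).differentiableAt
  have hcont : Continuous (fun s => L n s t) := hdiff.continuous
  have hU : {s : ℝ | L n s t ≠ 0} ∈ nhds x :=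
    (isOpen_compl_singleton.preimage hcont).mem_nhds h
  have hev : deriv (fun s => L₁ n s t / L n s t) =ᶠ[nhds x]
      fun s => (L₂ n s t * L n s t - L₁ n s t * L₁ n s t) / (L n s t) ^ 2 :=
    Filter.eventually_of_mem hU fun s hs => ((hL₂ n s t).div (hL₁ n s t) hs).deriv
  have hbig : HasDerivAt
      (fun s => (L₂ n s t * L n s t - L₁ n s t * L₁ n s t) / (L n s t) ^ 2)
      (((L₃ n x t * L n x t + L₂ n x t * L₁ n x t
          - (L₂ n x t * L₁ n x t + L₁ n x t * L₂ n x t)) * (L n x t) ^ 2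
        - (L₂ n x t * L n x t - L₁ n x t * L₁ n x t)
            * ((2 : ℝ) * (L n x t) ^ (2 - 1) * L₁ n x t)) / ((L n x t) ^ 2) ^ 2) x :=
    (((hL₃ n x t).mul (hL₁ n x t)).sub ((hL₂ n x t).mul (hL₂ n x t))).div
      ((hL₁ n x t).pow 2) (pow_ne_zero 2 h)
  rw [e1, e2, eu, ((hM n x t).fun_div (hT n x t) h).deriv,
    Filter.EventuallyEq.deriv_eq hev, hbig.deriv,
    ((hL₂ n x t).fun_div (hL₁ n x t) h).deriv, heatEq n x t, mixedEq n x t]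
  field_simp
  ring
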